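/- Let V be a finite-dimensional vector space over a field F, let A_1,…,A_n be subspaces with V = A_1 ⊕ ⋯ ⊕ A_n, and let C be a subspace of V such that C ∩ (Σ_{i≠k} A_i) = 0 for every k ∈ {1,…,n}. Let S_1,…,S_m be nonempty subsets of {1,…,n} and suppose the n×m matrix over F whose (j,i) entry is 1 if j ∈ S_i and 0 otherwise has rank m − 1. Then dim( π_{S_1}(C) + ⋯ + π_{S_m}(C) ) = (m − 1) · dim C. -/

import Mathlib

open Finset

/-- Claim 1 of the paper, rank `m − 1` case: suppose `V = A_1 ⊕ ⋯ ⊕ A_n`,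
`C ∩ (Σ_{i≠k} A_i) = 0` for every `k`, the sets `S_1,…,S_m ⊆ {1,…,n}` are
nonempty, the associated `n×m` 0/1 matrix over `F` has rank `m − 1`, and `π i` is
the canonical projection onto `⊕_{j∈S_i} A_j` along `⊕_{j∉S_i} A_j`.  Then
`dim(π_{S_1}(C) + ⋯ + π_{S_m}(C)) = (m−1)·dim C`. -/
theorem dim_sum_proj_of_rank_eq_sub_one (F V : Type*) [Field F] [AddCommGroup V] [Module F V]
    [FiniteDimensional F V] (n m : ℕ) (A : Fin n → Submodule F V)
    (hA : DirectSum.IsInternal A)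
    (C : Submodule F V) (hC : ∀ k, C ⊓ (∑ i ∈ univ.erase k, A i) = ⊥)
    (S : Fin m → Finset (Fin n)) (hS : ∀ i, (S i).Nonempty)
    (hrank : (Matrix.of fun (j : Fin n) (i : Fin m) =>
      if j ∈ S i then (1 : F) else 0).rank = m - 1)
    (π : Fin m → (V →ₗ[F] V))
    (hπ1 : ∀ i, ∀ j ∈ S i, ∀ v ∈ A j, π i v = v)
    (hπ2 : ∀ i, ∀ j ∉ S i, ∀ v ∈ A j, π i v = 0) :
    Module.finrank F (∑ i : Fin m, Submodule.map (π i) C : Submodule F V)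
      = (m - 1) * Module.finrank F C := by
  classical
  rcases Nat.eq_zero_or_pos m with hm0 | hm0
  · subst hm0
    simp
  set M : Matrix (Fin n) (Fin m) F :=
    Matrix.of fun (j : Fin n) (i : Fin m) => if j ∈ S i then (1 : F) else 0 with hMdef
  -- the projections onto the summands A j
  set e : V ≃ₗ[F] DirectSum (Fin n) fun i => ↥(A i) :=
    (LinearEquiv.ofBijective (DirectSum.coeLinearMap A) hA).symm with he
  set p : Fin n → (V →ₗ[F] V) := fun j =>
    (A j).subtype ∘ₗ ((DirectSum.component F (Fin n) (fun i => ↥(A i)) j) ∘ₗ e.toLinearMap)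
    with hpdef
  have hmem : ∀ j v, p j v ∈ A j := fun j v => ((e v) j).2
  have hpA : ∀ (j k : Fin n) (v : V), v ∈ A j → p k v = if k = j then v else 0 := by
    intro j k v hv
    by_cases hkj : k = j
    · subst hkj
      simp only [if_pos rfl, hpdef, LinearMap.coe_comp, Function.comp_apply,
        LinearEquiv.coe_coe, Submodule.coe_subtype]
      rw [← DirectSum.apply_eq_component]
      rw [hA.ofBijective_coeLinearMap_of_mem hv]
      simp
    · simp only [if_neg hkj, hpdef, LinearMap.coe_comp, Function.comp_apply,
        LinearEquiv.coe_coe, Submodule.coe_subtype]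
      rw [← DirectSum.apply_eq_component]
      rw [hA.ofBijective_coeLinearMap_of_mem_ne (Ne.symm hkj) hv]
      rfl
  have hsum : ∀ v, ∑ j, p j v = v := by
    intro v
    have h1 : DirectSum.coeLinearMap A (e v) = v := by
      simp [he]
      exact (LinearEquiv.ofBijective (DirectSum.coeLinearMap A) hA).apply_symm_apply v
    calc ∑ j, p j v = DirectSum.coeLinearMap A (e v) := by
          rw [← DirectSum.sum_univ_of (e v), map_sum]
          exact Finset.sum_congr rfl fun j _ => by
            rw [DirectSum.coeLinearMap_of]
            rfl
      _ = v := h1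
  -- π i in terms of the p j
  have hπp : ∀ i (v : V), π i v = ∑ j, M j i • p j v := by
    intro i v
    conv_lhs => rw [← hsum v, map_sum]
    refine Finset.sum_congr rfl fun j _ => ?_
    by_cases hj : j ∈ S i
    · rw [hπ1 i j hj _ (hmem j v)]
      simp [hMdef, hj]
    · rw [hπ2 i j hj _ (hmem j v)]
      simp [hMdef, hj]
  -- injectivity of components on C
  have hCinj : ∀ (k : Fin n) (c : V), c ∈ C → p k c = 0 → c = 0 := by
    intro k c hc h0
    have hmem2 : c ∈ ∑ i ∈ univ.erase k, A i := by
      rw [← hsum c, ← Finset.sum_erase (f := fun j => p j c) univ h0]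
      refine Submodule.sum_mem _ fun j hj => ?_
      exact Finset.single_le_sum (f := A) (fun i _ => zero_le) hj (hmem j c)
    have : c ∈ C ⊓ ∑ i ∈ univ.erase k, A i := ⟨hc, hmem2⟩
    rwa [hC k, Submodule.mem_bot] at this
  -- the big map and the matrix map
  set Φ : (Fin m → C) →ₗ[F] V :=
    ∑ i : Fin m, (π i) ∘ₗ (C.subtype ∘ₗ LinearMap.proj i) with hΦdef
  have hΦ : ∀ c : Fin m → C, Φ c = ∑ i, π i (c i) := by
    intro c
    simp [hΦdef, LinearMap.sum_apply]
  set L : (Fin m → C) →ₗ[F] (Fin n → C) :=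
    LinearMap.pi (fun j => ∑ i : Fin m, M j i • LinearMap.proj i) with hLdef
  have hL : ∀ (c : Fin m → C) (j : Fin n), L c j = ∑ i, M j i • c i := by
    intro c j
    simp [hLdef, LinearMap.sum_apply]
  have hΦL : ∀ c : Fin m → C, Φ c = ∑ j, p j ((L c j : V)) := by
    intro c
    rw [hΦ]
    calc ∑ i, π i (c i) = ∑ i, ∑ j, M j i • p j (c i : V) := by
          exact Finset.sum_congr rfl fun i _ => hπp i _
      _ = ∑ j, ∑ i, M j i • p j (c i : V) := Finset.sum_comm
      _ = ∑ j, p j ((L c j : V)) := by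
          refine Finset.sum_congr rfl fun j _ => ?_
          rw [hL]
          push_cast
          rw [map_sum]
          exact Finset.sum_congr rfl fun i _ => by rw [map_smul]
  -- kernels agree
  have hker : LinearMap.ker Φ = LinearMap.ker L := by
    ext c
    simp only [LinearMap.mem_ker]
    constructor
    · intro h
      funext k
      have h2 : p k (Φ c) = 0 := by rw [h, map_zero]
      rw [hΦL, map_sum] at h2
      have h3 : ∀ j ∈ (univ : Finset (Fin n)),
          p k (p j ((L c j : V))) = if k = j then p j ((L c j : V)) else 0 :=
        fun j _ => hpA j k _ (hmem j _)
      rw [Finset.sum_congr rfl h3, Finset.sum_ite_eq] at h2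
      simp only [Finset.mem_univ, if_pos] at h2
      have h4 : p k ((L c k : V)) = 0 := h2
      have := hCinj k _ (L c k).2 h4
      exact Subtype.ext this
    · intro h
      rw [hΦL]
      simp [h]
  -- range is the sum of projections of C
  have hrange : LinearMap.range Φ = ∑ i : Fin m, Submodule.map (π i) C := by
    apply le_antisymm
    · rintro x ⟨c, rfl⟩
      rw [hΦ]
      refine Submodule.sum_mem _ fun i _ => ?_
      have h1 : π i ((c i : V)) ∈ Submodule.map (π i) C := ⟨c i, (c i).2, rfl⟩
      exact Finset.single_le_sum (f := fun i => Submodule.map (π i) C)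
        (fun i _ => zero_le) (Finset.mem_univ i) h1
    · have hle : ∀ i, Submodule.map (π i) C ≤ LinearMap.range Φ := by
        rintro i x ⟨v, hv, rfl⟩
        refine ⟨Pi.single i ⟨v, hv⟩, ?_⟩
        rw [hΦ, Finset.sum_eq_single i]
        · simp
        · intro i' _ hi'
          rw [Pi.single_eq_of_ne hi']
          simp
        · simp
      refine Finset.sum_induction _ (· ≤ LinearMap.range Φ) ?_ ?_ (fun i _ => hle i)
      · intro a b ha hb
        rw [Submodule.add_eq_sup]
        exact sup_le ha hb
      · exact bot_le
  -- kernel of the matrix is one dimensional, spanned by w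
  have hrn := LinearMap.finrank_range_add_finrank_ker M.mulVecLin
  rw [Module.finrank_fintype_fun_eq_card, Fintype.card_fin] at hrn
  have hrank' : Module.finrank F (LinearMap.range M.mulVecLin) = m - 1 := hrank
  have hkd : Module.finrank F (LinearMap.ker M.mulVecLin) = 1 := by omega
  obtain ⟨w, hwker, hw0⟩ : ∃ b, b ∈ LinearMap.ker M.mulVecLin ∧ b ≠ 0 := by
    apply Submodule.exists_mem_ne_zero_of_ne_bot
    intro hbot
    rw [hbot] at hkd
    simp at hkd
  have hspan : Submodule.span F {w} = LinearMap.ker M.mulVecLin := by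
    apply Submodule.eq_of_le_of_finrank_le
    · rw [Submodule.span_le, Set.singleton_subset_iff]; exact hwker
    · rw [hkd, finrank_span_singleton hw0]
  have hwmul : M.mulVec w = 0 := by rwa [LinearMap.mem_ker, Matrix.mulVecLin_apply] at hwker
  obtain ⟨i0, hwi0⟩ : ∃ i0, w i0 ≠ 0 := by
    by_contra hcon
    push_neg at hcon
    exact hw0 (funext hcon)
  -- the kernel of L is isomorphic to C
  set eC : (C : Type _) →ₗ[F] (Fin m → C) := LinearMap.pi (fun i => w i • LinearMap.id) with heCdef
  have heC : ∀ (c : C) (i : Fin m), eC c i = w i • c := by intro c i; simp [heCdef]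
  have heCinj : Function.Injective eC := by
    rw [← LinearMap.ker_eq_bot, LinearMap.ker_eq_bot']
    intro c hc
    have := congrFun hc i0
    rw [heC] at this
    simpa [hwi0] using this
  have hrangeeC : LinearMap.range eC = LinearMap.ker L := by
    apply le_antisymm
    · rintro _ ⟨c, rfl⟩
      rw [LinearMap.mem_ker]
      funext j
      rw [hL]
      have : ∀ i ∈ (univ : Finset (Fin m)), M j i • eC c i = (M j i * w i) • c := by
        intro i _
        rw [heC, smul_smul]
      rw [Finset.sum_congr rfl this, ← Finset.sum_smul]
      have hz : ∑ i, M j i * w i = 0 := by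
        have := congrFun hwmul j
        simpa [Matrix.mulVec, dotProduct] using this
      simp [hz]
    · intro c hc
      rw [LinearMap.mem_ker] at hc
      refine ⟨(w i0)⁻¹ • c i0, ?_⟩
      have key : ∀ f : Module.Dual F C, ∃ t, ∀ i, f (c i) = t * w i := by
        intro f
        have hy : M.mulVec (fun i => f (c i)) = 0 := by
          funext j
          have h1 : ∑ i, M j i * f (c i) = f (L c j) := by
            rw [hL, map_sum]
            exact Finset.sum_congr rfl fun i _ => by rw [map_smul, smul_eq_mul]
          have h2 : L c j = 0 := by rw [hc]; rfl
          simp [Matrix.mulVec, dotProduct, h1, h2]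
        have hmem' : (fun i => f (c i)) ∈ Submodule.span F {w} := by
          rw [hspan, LinearMap.mem_ker, Matrix.mulVecLin_apply]
          exact hy
        rw [Submodule.mem_span_singleton] at hmem'
        obtain ⟨t, ht⟩ := hmem'
        exact ⟨t, fun i => by rw [← congrFun ht i]; simp [mul_comm]⟩
      funext i
      rw [heC]
      rw [← sub_eq_zero, ← neg_sub, neg_eq_zero]
      rw [← Module.forall_dual_apply_eq_zero_iff F]
      intro f
      obtain ⟨t, ht⟩ := key f
      rw [map_sub, map_smul, map_smul, ht i, ht i0, smul_eq_mul, smul_eq_mul]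
      field_simp
      ring
  -- final count
  have hrn2 := LinearMap.finrank_range_add_finrank_ker Φ
  rw [hker, ← hrangeeC, LinearMap.finrank_range_of_inj heCinj, hrange] at hrn2
  have hpi : Module.finrank F (Fin m → C) = m * Module.finrank F C := by
    rw [Module.finrank_pi_fintype, Finset.sum_const, Finset.card_univ, Fintype.card_fin,
      smul_eq_mul]
  rw [hpi] at hrn2
  have hsub : (m - 1) * Module.finrank F C = m * Module.finrank F C - Module.finrank F C := by
    rw [Nat.sub_mul, one_mul]
  rw [hsub]
  omega
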